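/- Let X ⊆ Y be subspaces of ℝ^d, let b be a unit vector with b ∉ Y and b orthogonal to both X and Y (i.e., b ∈ Y^⊥). Then for vectors u, w ∈ ℝ^d, (‖Π_{Ȳ} w‖² ⟨b,u⟩² − ‖Π_Y u‖² ⟨b,w⟩² − ⟨b,u⟩²⟨b,w⟩²) ≤ (‖Π_{X̄} w‖² ⟨b,u⟩² − ‖Π_X u‖² ⟨b,w⟩² − ⟨b,u⟩²⟨b,w⟩²), where X̄, Ȳ denote orthogonal complements and Π is orthogonal projection. -/

import Mathlib

open RealInnerProductSpace

lemma proj_mono {d : ℕ} (X Y : Submodule ℝ (EuclideanSpace ℝ (Fin d))) (hXY : X ≤ Y)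
    (v : EuclideanSpace ℝ (Fin d)) :
    ‖Submodule.orthogonalProjectionOnto X v‖ ≤ ‖Submodule.orthogonalProjectionOnto Y v‖ := by
  have h := Submodule.orthogonalProjectionOnto_starProjection_of_le hXY v
  calc ‖Submodule.orthogonalProjectionOnto X v‖ = ‖Submodule.orthogonalProjectionOnto X (Submodule.orthogonalProjectionOnto Y v : EuclideanSpace ℝ (Fin d))‖ := by rw [← h, Submodule.starProjection_apply]
    _ ≤ 1 * ‖(Submodule.orthogonalProjectionOnto Y v : EuclideanSpace ℝ (Fin d))‖ := by
        simpa using (Submodule.orthogonalProjectionOnto X).le_of_opNorm_le (Submodule.orthogonalProjectionOnto_norm_le X) _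
    _ = ‖Submodule.orthogonalProjectionOnto Y v‖ := by simp

/-- Key summand inequality for downward DR-submodularity of the quantum cut function:
for subspaces `X ⊆ Y` of `ℝ^d` and a unit vector `b ∉ Y` with `b ∈ Yᗮ`,
`‖Π_{Ȳ} w‖²⟨b,u⟩² − ‖Π_Y u‖²⟨b,w⟩² − ⟨b,u⟩²⟨b,w⟩²
  ≤ ‖Π_{X̄} w‖²⟨b,u⟩² − ‖Π_X u‖²⟨b,w⟩² − ⟨b,u⟩²⟨b,w⟩²`. -/
theorem quantum_cut_summand_ineq (d : ℕ)
    (X Y : Submodule ℝ (EuclideanSpace ℝ (Fin d))) (hXY : X ≤ Y)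
    (b : EuclideanSpace ℝ (Fin d)) (hb : ‖b‖ = 1) (hbY : b ∉ Y) (hbYperp : b ∈ Yᗮ)
    (u w : EuclideanSpace ℝ (Fin d)) :
    ‖Submodule.orthogonalProjectionOnto Yᗮ w‖ ^ 2 * ⟪b, u⟫ ^ 2 - ‖Submodule.orthogonalProjectionOnto Y u‖ ^ 2 * ⟪b, w⟫ ^ 2
        - ⟪b, u⟫ ^ 2 * ⟪b, w⟫ ^ 2 ≤
      ‖Submodule.orthogonalProjectionOnto Xᗮ w‖ ^ 2 * ⟪b, u⟫ ^ 2 - ‖Submodule.orthogonalProjectionOnto X u‖ ^ 2 * ⟪b, w⟫ ^ 2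
        - ⟪b, u⟫ ^ 2 * ⟪b, w⟫ ^ 2 := by
  have h1 : ‖Submodule.orthogonalProjectionOnto Yᗮ w‖ ≤ ‖Submodule.orthogonalProjectionOnto Xᗮ w‖ :=
    proj_mono _ _ (Submodule.orthogonal_le hXY) w
  have h2 : ‖Submodule.orthogonalProjectionOnto X u‖ ≤ ‖Submodule.orthogonalProjectionOnto Y u‖ := proj_mono _ _ hXY u
  have n1 : (0:ℝ) ≤ ‖Submodule.orthogonalProjectionOnto Yᗮ w‖ := norm_nonneg _
  have n2 : (0:ℝ) ≤ ‖Submodule.orthogonalProjectionOnto X u‖ := norm_nonneg _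
  nlinarith [sq_nonneg (⟪b, u⟫ : ℝ), sq_nonneg (⟪b, w⟫ : ℝ), mul_le_mul_of_nonneg_right (mul_self_le_mul_self n1 h1) (sq_nonneg (⟪b, u⟫ : ℝ)), mul_le_mul_of_nonneg_right (mul_self_le_mul_self n2 h2) (sq_nonneg (⟪b, w⟫ : ℝ))]
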